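/- Let α > 0 be real. Set C₁ := α and C₂ := 2^{1−α} if α ∈ (0,1], and C₁ := 2^{1−α} and C₂ := α if α ∈ [1,∞). Then for all a, b ∈ ℝ: C₁ (|a|+|b|)^{α−1} |a−b| ≤ | |b|^{α−1} b − |a|^{α−1} a | ≤ C₂ (|a|+|b|)^{α−1} |a−b|, with the convention that the expression (|a|+|b|)^{α−1}|a−b| is interpreted as 0 when a = b (so that for a = b all three quantities vanish). -/
import Mathlib


open Real



namespace S16

variable {α : ℝ}

lemma rpow_mul_self (hα : 0 < α) {x : ℝ} (hx : 0 ≤ x) : x ^ (α - 1) * x = x ^ α := by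
  rcases hx.eq_or_lt with h | h
  · simp [← h, Real.zero_rpow hα.ne']
  · rw [← Real.rpow_add_one h.ne' (α - 1), sub_add_cancel]

lemma M_ge1 (hα : 1 ≤ α) {x y : ℝ} (hy : 0 ≤ y) (hxy : y ≤ x) :
    x ^ (α - 1) * (x - y) ≤ x ^ α - y ^ α := by
  have hα0 : 0 < α := lt_of_lt_of_le one_pos hα
  have hx : 0 ≤ x := hy.trans hxy
  have h1 : y ^ α ≤ x ^ (α - 1) * y := by
    rw [← rpow_mul_self hα0 hy]
    exact mul_le_mul_of_nonneg_right (Real.rpow_le_rpow hy hxy (by linarith)) hy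
  have h2 : x ^ (α - 1) * x = x ^ α := rpow_mul_self hα0 hx
  nlinarith [h1, h2]

lemma M_le1 (hα0 : 0 < α) (hα : α ≤ 1) {x y : ℝ} (hy : 0 ≤ y) (hxy : y ≤ x) :
    x ^ α - y ^ α ≤ x ^ (α - 1) * (x - y) := by
  have hx : 0 ≤ x := hy.trans hxy
  have h2 : x ^ (α - 1) * x = x ^ α := rpow_mul_self hα0 hx
  rcases hy.eq_or_lt with h | h
  · rw [← h]
    simp [Real.zero_rpow hα0.ne', h2.ge]
  · have h1 : x ^ (α - 1) * y ≤ y ^ α := by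
      rw [← rpow_mul_self hα0 hy]
      exact mul_le_mul_of_nonneg_right (Real.rpow_le_rpow_of_nonpos h hxy (by linarith)) hy
    nlinarith [h1, h2]

lemma tangent_ge1 (hα : 1 ≤ α) {m t : ℝ} (hm : 0 < m) (ht : 0 ≤ t) :
    m ^ α + α * m ^ (α - 1) * (t - m) ≤ t ^ α := by
  have hα0 : 0 < α := lt_of_lt_of_le one_pos hα
  have hs : (-1 : ℝ) ≤ t / m - 1 := by
    have : 0 ≤ t / m := by positivity
    linarith
  have hb := one_add_mul_self_le_rpow_one_add hs hα
  rw [show (1 : ℝ) + (t / m - 1) = t / m by ring] at hb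
  rw [Real.div_rpow ht hm.le] at hb
  have hmα : 0 < m ^ α := Real.rpow_pos_of_pos hm α
  have h3 : (1 + α * (t / m - 1)) * m ^ α ≤ t ^ α := (le_div_iff₀ hmα).mp hb
  have hm1 : m ^ (α - 1) * m = m ^ α := rpow_mul_self hα0 hm.le
  have he : (1 + α * (t / m - 1)) * m ^ α = m ^ α + α * m ^ (α - 1) * (t - m) := by
    field_simp
    linear_combination α * (m - t) * hm1
  linarith [he ▸ h3]

lemma tangent_le1 (hα0 : 0 < α) (hα : α ≤ 1) {m t : ℝ} (hm : 0 < m) (ht : 0 ≤ t) :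
    t ^ α ≤ m ^ α + α * m ^ (α - 1) * (t - m) := by
  have hs : (-1 : ℝ) ≤ t / m - 1 := by
    have : 0 ≤ t / m := by positivity
    linarith
  have hb := rpow_one_add_le_one_add_mul_self hs hα0.le hα
  rw [show (1 : ℝ) + (t / m - 1) = t / m by ring] at hb
  rw [Real.div_rpow ht hm.le] at hb
  have hmα : 0 < m ^ α := Real.rpow_pos_of_pos hm α
  have h3 : t ^ α ≤ (1 + α * (t / m - 1)) * m ^ α := (div_le_iff₀ hmα).mp hb
  have hm1 : m ^ (α - 1) * m = m ^ α := rpow_mul_self hα0 hm.le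
  have he : (1 + α * (t / m - 1)) * m ^ α = m ^ α + α * m ^ (α - 1) * (t - m) := by
    field_simp
    linear_combination α * (m - t) * hm1
  linarith [he ▸ h3]


lemma upper_ge1 (hα : 1 ≤ α) {a b : ℝ} (ha : 0 ≤ a) (hab : a ≤ b) :
    b ^ α - a ^ α ≤ α * (a + b) ^ (α - 1) * (b - a) := by
  have hα0 : 0 < α := lt_of_lt_of_le one_pos hα
  have hb : 0 ≤ b := ha.trans hab
  rcases hb.eq_or_lt with h | h
  · have ha0 : a = 0 := le_antisymm (h ▸ hab) ha
    simp [ha0, ← h]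
  · have t := tangent_ge1 hα h ha
    have step1 : b ^ α - a ^ α ≤ α * b ^ (α - 1) * (b - a) := by linarith [t]
    have step2 : b ^ (α - 1) ≤ (a + b) ^ (α - 1) :=
      Real.rpow_le_rpow hb (by linarith) (by linarith)
    have s3 := mul_le_mul_of_nonneg_left
      (mul_le_mul_of_nonneg_right step2 (sub_nonneg.mpr hab)) hα0.le
    nlinarith [step1, s3]

lemma lower_ge1 (hα : 1 ≤ α) {a b : ℝ} (ha : 0 ≤ a) (hab : a ≤ b) :
    (2 : ℝ) ^ (1 - α) * (a + b) ^ (α - 1) * (b - a) ≤ b ^ α - a ^ α := by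
  have hα0 : 0 < α := lt_of_lt_of_le one_pos hα
  have hb : 0 ≤ b := ha.trans hab
  rcases hb.eq_or_lt with h | h
  · have ha0 : a = 0 := le_antisymm (h ▸ hab) ha
    simp [ha0, ← h]
  · set m : ℝ := (a + b) / 2 with hmdef
    have hm : 0 < m := by simp only [hmdef]; linarith
    have e1 : (2 : ℝ) ^ (1 - α) * (a + b) ^ (α - 1) = m ^ (α - 1) := by
      rw [hmdef, Real.div_rpow (by linarith) (by norm_num) (α - 1),
        show (1 - α) = -(α - 1) by ring, Real.rpow_neg (by norm_num)]
      ring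
    have hmb : m ≤ b := by simp only [hmdef]; linarith
    have ham : a ≤ m := by simp only [hmdef]; linarith
    have h1 := M_ge1 hα hm.le hmb
    have h1' : m ^ (α - 1) * (b - m) ≤ b ^ (α - 1) * (b - m) :=
      mul_le_mul_of_nonneg_right (Real.rpow_le_rpow hm.le hmb (by linarith)) (by linarith)
    have h2 := M_ge1 hα ha ham
    rw [e1]
    nlinarith [h1, h1', h2]

lemma lower_le1 (hα0 : 0 < α) (hα : α ≤ 1) {a b : ℝ} (ha : 0 ≤ a) (hab : a ≤ b) :
    α * (a + b) ^ (α - 1) * (b - a) ≤ b ^ α - a ^ α := by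
  have hb : 0 ≤ b := ha.trans hab
  rcases hb.eq_or_lt with h | h
  · have ha0 : a = 0 := le_antisymm (h ▸ hab) ha
    simp [ha0, ← h]
  · have t := tangent_le1 hα0 hα h ha
    have step1 : α * b ^ (α - 1) * (b - a) ≤ b ^ α - a ^ α := by linarith [t]
    have step2 : (a + b) ^ (α - 1) ≤ b ^ (α - 1) :=
      Real.rpow_le_rpow_of_nonpos h (by linarith) (by linarith)
    have s3 := mul_le_mul_of_nonneg_left
      (mul_le_mul_of_nonneg_right step2 (sub_nonneg.mpr hab)) hα0.le
    nlinarith [step1, s3]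

lemma upper_le1 (hα0 : 0 < α) (hα : α ≤ 1) {a b : ℝ} (ha : 0 ≤ a) (hab : a ≤ b) :
    b ^ α - a ^ α ≤ (2 : ℝ) ^ (1 - α) * (a + b) ^ (α - 1) * (b - a) := by
  have hb : 0 ≤ b := ha.trans hab
  rcases hb.eq_or_lt with h | h
  · have ha0 : a = 0 := le_antisymm (h ▸ hab) ha
    simp [ha0, ← h]
  · set m : ℝ := (a + b) / 2 with hmdef
    have hm : 0 < m := by simp only [hmdef]; linarith
    have e1 : (2 : ℝ) ^ (1 - α) * (a + b) ^ (α - 1) = m ^ (α - 1) := by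
      rw [hmdef, Real.div_rpow (by linarith) (by norm_num) (α - 1),
        show (1 - α) = -(α - 1) by ring, Real.rpow_neg (by norm_num)]
      ring
    have hmb : m ≤ b := by simp only [hmdef]; linarith
    have ham : a ≤ m := by simp only [hmdef]; linarith
    have h1 := M_le1 hα0 hα hm.le hmb
    have h1' : b ^ (α - 1) * (b - m) ≤ m ^ (α - 1) * (b - m) :=
      mul_le_mul_of_nonneg_right (Real.rpow_le_rpow_of_nonpos hm hmb (by linarith)) (by linarith)
    have h2 := M_le1 hα0 hα ha ham
    rw [e1]
    nlinarith [h1, h1', h2]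

lemma mixed_ge1 (hα : 1 ≤ α) {b c : ℝ} (hb : 0 ≤ b) (hc : 0 ≤ c) :
    (2 : ℝ) ^ (1 - α) * (b + c) ^ (α - 1) * (b + c) ≤ b ^ α + c ^ α ∧
      b ^ α + c ^ α ≤ α * (b + c) ^ (α - 1) * (b + c) := by
  have hα0 : 0 < α := lt_of_lt_of_le one_pos hα
  rcases (by linarith : (0:ℝ) ≤ b + c).eq_or_lt with h | h
  · have hb0 : b = 0 := by linarith
    have hc0 : c = 0 := by linarith
    simp [hb0, hc0, Real.zero_rpow hα0.ne']
  · have ebc : (b + c) ^ (α - 1) * (b + c) = (b + c) ^ α := rpow_mul_self hα0 h.le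
    have hbcα : 0 ≤ (b + c) ^ α := Real.rpow_nonneg h.le α
    constructor
    · -- 2^(1-α) (b+c)^α ≤ b^α + c^α  via midpoint
      set m : ℝ := (b + c) / 2 with hmdef
      have hm : 0 < m := by simp only [hmdef]; linarith
      have t1 := tangent_ge1 hα hm hb
      have t2 := tangent_ge1 hα hm hc
      have hsum : 2 * m ^ α ≤ b ^ α + c ^ α := by
        have hz : α * m ^ (α - 1) * (b - m) + α * m ^ (α - 1) * (c - m) = 0 := by
          rw [hmdef]; ring
        linarith [t1, t2, hz]
      have e2 : (2 : ℝ) ^ (1 - α) * (b + c) ^ α = 2 * m ^ α := by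
        rw [show b + c = 2 * m by simp only [hmdef]; ring,
          Real.mul_rpow (by norm_num) hm.le, ← mul_assoc,
          ← Real.rpow_add (by norm_num : (0:ℝ) < 2)]
        norm_num
      rw [mul_assoc, ebc, e2]
      exact hsum
    · -- superadditivity then α factor
      have hsuper : b ^ α + c ^ α ≤ (b + c) ^ α := by
        rcases hb.eq_or_lt with hb0 | hb0
        · simp [← hb0, Real.zero_rpow hα0.ne']
        · have h4 := M_ge1 hα hc (by linarith : c ≤ b + c)
          rw [add_sub_cancel_right] at h4
          have h5 : b ^ α ≤ (b + c) ^ (α - 1) * b := by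
            rw [← rpow_mul_self hα0 hb]
            exact mul_le_mul_of_nonneg_right
              (Real.rpow_le_rpow hb (by linarith) (by linarith)) hb
          linarith
      rw [mul_assoc, ebc]
      nlinarith [hsuper, hbcα]

lemma mixed_le1 (hα0 : 0 < α) (hα : α ≤ 1) {b c : ℝ} (hb : 0 ≤ b) (hc : 0 ≤ c) :
    α * (b + c) ^ (α - 1) * (b + c) ≤ b ^ α + c ^ α ∧
      b ^ α + c ^ α ≤ (2 : ℝ) ^ (1 - α) * (b + c) ^ (α - 1) * (b + c) := by
  rcases (by linarith : (0:ℝ) ≤ b + c).eq_or_lt with h | h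
  · have hb0 : b = 0 := by linarith
    have hc0 : c = 0 := by linarith
    simp [hb0, hc0, Real.zero_rpow hα0.ne']
  · have ebc : (b + c) ^ (α - 1) * (b + c) = (b + c) ^ α := rpow_mul_self hα0 h.le
    have hbcα : 0 ≤ (b + c) ^ α := Real.rpow_nonneg h.le α
    constructor
    · have hsub : (b + c) ^ α ≤ b ^ α + c ^ α := by
        rcases hb.eq_or_lt with hb0 | hb0
        · simp [← hb0, Real.zero_rpow hα0.ne']
        · have h4 := M_le1 hα0 hα hc (by linarith : c ≤ b + c)
          rw [add_sub_cancel_right] at h4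
          have h5 : (b + c) ^ (α - 1) * b ≤ b ^ α := by
            rw [← rpow_mul_self hα0 hb]
            exact mul_le_mul_of_nonneg_right
              (Real.rpow_le_rpow_of_nonpos hb0 (by linarith) (by linarith)) hb
          linarith
      rw [mul_assoc, ebc]
      nlinarith [hsub, hbcα]
    · set m : ℝ := (b + c) / 2 with hmdef
      have hm : 0 < m := by simp only [hmdef]; linarith
      have t1 := tangent_le1 hα0 hα hm hb
      have t2 := tangent_le1 hα0 hα hm hc
      have hsum : b ^ α + c ^ α ≤ 2 * m ^ α := by
        have hz : α * m ^ (α - 1) * (b - m) + α * m ^ (α - 1) * (c - m) = 0 := by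
          rw [hmdef]; ring
        linarith [t1, t2, hz]
      have e2 : (2 : ℝ) ^ (1 - α) * (b + c) ^ α = 2 * m ^ α := by
        rw [show b + c = 2 * m by simp only [hmdef]; ring,
          Real.mul_rpow (by norm_num) hm.le, ← mul_assoc,
          ← Real.rpow_add (by norm_num : (0:ℝ) < 2)]
        norm_num
      rw [mul_assoc, ebc, e2]
      exact hsum


lemma core (hα0 : 0 < α) (C₁ C₂ : ℝ)
    (H1 : ∀ a b : ℝ, 0 ≤ a → a ≤ b → C₁ * (a + b) ^ (α - 1) * (b - a) ≤ b ^ α - a ^ α)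
    (H2 : ∀ a b : ℝ, 0 ≤ a → a ≤ b → b ^ α - a ^ α ≤ C₂ * (a + b) ^ (α - 1) * (b - a))
    (H3 : ∀ b c : ℝ, 0 ≤ b → 0 ≤ c → C₁ * (b + c) ^ (α - 1) * (b + c) ≤ b ^ α + c ^ α)
    (H4 : ∀ b c : ℝ, 0 ≤ b → 0 ≤ c → b ^ α + c ^ α ≤ C₂ * (b + c) ^ (α - 1) * (b + c)) :
    ∀ a b : ℝ,
      C₁ * (|a| + |b|) ^ (α - 1) * |a - b| ≤ |(|b| ^ (α - 1) * b - |a| ^ (α - 1) * a)| ∧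
        |(|b| ^ (α - 1) * b - |a| ^ (α - 1) * a)| ≤ C₂ * (|a| + |b|) ^ (α - 1) * |a - b| := by
  have key : ∀ a b : ℝ, |a| ≤ b →
      C₁ * (|a| + |b|) ^ (α - 1) * |a - b| ≤ |(|b| ^ (α - 1) * b - |a| ^ (α - 1) * a)| ∧
        |(|b| ^ (α - 1) * b - |a| ^ (α - 1) * a)| ≤ C₂ * (|a| + |b|) ^ (α - 1) * |a - b| := by
    intro a b hab
    have hb : 0 ≤ b := (abs_nonneg a).trans hab
    have hab' : a ≤ b := (le_abs_self a).trans hab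
    rw [abs_of_nonneg hb, abs_sub_comm, abs_of_nonneg (by linarith : (0:ℝ) ≤ b - a)]
    have eb : b ^ (α - 1) * b = b ^ α := rpow_mul_self hα0 hb
    rcases le_or_gt 0 a with ha | ha
    · rw [abs_of_nonneg ha, eb, rpow_mul_self hα0 ha]
      have hmono : a ^ α ≤ b ^ α := Real.rpow_le_rpow ha hab' hα0.le
      rw [abs_of_nonneg (by linarith : (0:ℝ) ≤ b ^ α - a ^ α)]
      exact ⟨H1 a b ha hab', H2 a b ha hab'⟩
    · rw [abs_of_neg ha]
      have hc : 0 ≤ -a := by linarith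
      have ec : (-a) ^ (α - 1) * a = -((-a) ^ α) := by
        rw [show (-a : ℝ) ^ (α - 1) * a = -((-a) ^ (α - 1) * (-a)) by ring,
          rpow_mul_self hα0 hc]
      rw [eb, ec, sub_neg_eq_add]
      have habs : |b ^ α + (-a) ^ α| = b ^ α + (-a) ^ α :=
        abs_of_nonneg (by positivity)
      rw [habs]
      have h3 := H3 b (-a) hb hc
      have h4 := H4 b (-a) hb hc
      constructor
      · calc C₁ * (-a + b) ^ (α - 1) * (b - a)
            = C₁ * (b + -a) ^ (α - 1) * (b + -a) := by ring_nf
          _ ≤ b ^ α + (-a) ^ α := h3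
      · calc b ^ α + (-a) ^ α ≤ C₂ * (b + -a) ^ (α - 1) * (b + -a) := h4
          _ = C₂ * (-a + b) ^ (α - 1) * (b - a) := by ring_nf
  have key2 : ∀ a b : ℝ, |a| ≤ |b| →
      C₁ * (|a| + |b|) ^ (α - 1) * |a - b| ≤ |(|b| ^ (α - 1) * b - |a| ^ (α - 1) * a)| ∧
        |(|b| ^ (α - 1) * b - |a| ^ (α - 1) * a)| ≤ C₂ * (|a| + |b|) ^ (α - 1) * |a - b| := by
    intro a b hab
    rcases le_or_gt 0 b with hb | hb
    · exact key a b (hab.trans_eq (abs_of_nonneg hb))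
    · have h := key (-a) (-b) (by rw [abs_neg]; exact hab.trans_eq (abs_of_neg hb))
      simp only [abs_neg] at h
      rw [show (-a : ℝ) - -b = -(a - b) by ring, abs_neg,
        show |b| ^ (α - 1) * (-b) - |a| ^ (α - 1) * (-a)
          = -(|b| ^ (α - 1) * b - |a| ^ (α - 1) * a) by ring, abs_neg] at h
      exact h
  intro a b
  rcases le_total |a| |b| with h | h
  · exact key2 a b h
  · have h2 := key2 b a h
    rw [abs_sub_comm b a, abs_sub_comm (|a| ^ (α - 1) * a), add_comm |b| |a|] at h2
    exact h2

end S16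

open S16

/-- algebraic inequality for odd powers, Lemma A.4: with
`C₁ = α`, `C₂ = 2^{1-α}` for `α ∈ (0,1]` and `C₁ = 2^{1-α}`, `C₂ = α` for
`α ∈ [1,∞)`.  The convention that `(|a|+|b|)^{α-1}|a-b|` is interpreted as `0`
when `a = b` is automatic from `Real.rpow` junk values together with the factor
`|a-b| = 0`. -/
theorem statement16 (α : ℝ) (hα : 0 < α) :
    ∀ a b : ℝ,
      (if α ≤ 1 then α else (2 : ℝ) ^ (1 - α)) * (|a| + |b|) ^ (α - 1) * |a - b|
          ≤ |(|b| ^ (α - 1) * b - |a| ^ (α - 1) * a)| ∧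
        |(|b| ^ (α - 1) * b - |a| ^ (α - 1) * a)|
          ≤ (if α ≤ 1 then (2 : ℝ) ^ (1 - α) else α) * (|a| + |b|) ^ (α - 1) * |a - b| := by

  by_cases h1 : α ≤ 1
  · simp only [if_pos h1]
    exact core hα α ((2:ℝ) ^ (1 - α))
      (fun a b ha hab => lower_le1 hα h1 ha hab)
      (fun a b ha hab => upper_le1 hα h1 ha hab)
      (fun b c hb hc => (mixed_le1 hα h1 hb hc).1)
      (fun b c hb hc => (mixed_le1 hα h1 hb hc).2)
  · have h1' : 1 ≤ α := le_of_not_ge h1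
    simp only [if_neg h1]
    exact core hα ((2:ℝ) ^ (1 - α)) α
      (fun a b ha hab => lower_ge1 h1' ha hab)
      (fun a b ha hab => upper_ge1 h1' ha hab)
      (fun b c hb hc => (mixed_ge1 h1' hb hc).1)
      (fun b c hb hc => (mixed_ge1 h1' hb hc).2)
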